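/- Let p ≥ 1 and let Σ be a real symmetric positive definite p × p matrix whose inverse Σ⁻¹ is tridiagonal. Then for all indices i ≤ j, Σ_{i,j} = Σ_{i,i} · ∏_{l=i}^{j−1} ( Σ_{l,l+1} / Σ_{l,l} ), with the empty product equal to 1. -/

import Mathlib

/-- The regression coefficient `Σ_{l,l+1} / Σ_{l,l}` of a matrix `Σ`
(0-based indices), with junk value `0` when out of range. -/
noncomputable def regressionStep {p : ℕ} (S : Matrix (Fin p) (Fin p) ℝ) (l : ℕ) : ℝ :=
  if h : l + 1 < p then
    S ⟨l, Nat.lt_of_succ_lt h⟩ ⟨l + 1, h⟩ / S ⟨l, Nat.lt_of_succ_lt h⟩ ⟨l, Nat.lt_of_succ_lt h⟩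
  else 0

namespace TriAux

/-- Extension of a `Fin p` matrix to `ℕ` indices, with `0` out of range. -/
noncomputable def Ext {p : ℕ} (A : Matrix (Fin p) (Fin p) ℝ) (m n : ℕ) : ℝ :=
  if h : m < p ∧ n < p then A ⟨m, h.1⟩ ⟨n, h.2⟩ else 0

variable {p : ℕ}

lemma ext_apply (A : Matrix (Fin p) (Fin p) ℝ) {m n : ℕ} (hm : m < p) (hn : n < p) :
    Ext A m n = A ⟨m, hm⟩ ⟨n, hn⟩ := by simp [Ext, hm, hn]

lemma ext_zero_left (A : Matrix (Fin p) (Fin p) ℝ) {m : ℕ} (hm : p ≤ m) (n : ℕ) :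
    Ext A m n = 0 := by simp [Ext]; omega

lemma ext_zero_right (A : Matrix (Fin p) (Fin p) ℝ) (m : ℕ) {n : ℕ} (hn : p ≤ n) :
    Ext A m n = 0 := by simp [Ext]; omega

lemma ext_symm {A : Matrix (Fin p) (Fin p) ℝ} (hA : ∀ a b : Fin p, A b a = A a b) (m n : ℕ) :
    Ext A n m = Ext A m n := by
  unfold Ext
  by_cases h : m < p ∧ n < p
  · rw [dif_pos ⟨h.2, h.1⟩, dif_pos h]; exact hA _ _
  · rw [dif_neg (by tauto), dif_neg h]

section Main

variable {S : Matrix (Fin p) (Fin p) ℝ} (hpd : S.PosDef)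
  (htri : ∀ j k : Fin p, 2 ≤ |(j : ℤ) - (k : ℤ)| → S⁻¹ j k = 0)

include hpd

lemma Ssymm : ∀ a b : Fin p, S b a = S a b := by
  intro a b
  have := hpd.isHermitian.apply a b
  simpa using this

lemma Osymm : ∀ a b : Fin p, S⁻¹ b a = S⁻¹ a b := by
  intro a b
  have := hpd.isHermitian.inv.apply a b
  simpa using this

lemma diag_pos (i : Fin p) : 0 < S i i := by
  exact hpd.diag_pos

lemma hOS : S⁻¹ * S = 1 := Matrix.nonsing_inv_mul S hpd.det_pos.ne'.isUnit

include htri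

/-- Three-term recurrence from `S⁻¹ * S = 1`, row `k+1`, column `i ≠ k+1`. -/
lemma three_term {k i : ℕ} (hk : k + 1 < p) (hi : i < p) (hne : i ≠ k + 1) :
    Ext S⁻¹ (k+1) k * Ext S k i + Ext S⁻¹ (k+1) (k+1) * Ext S (k+1) i
      + Ext S⁻¹ (k+1) (k+2) * Ext S (k+2) i = 0 := by
  set g : ℕ → ℝ := fun m => Ext S⁻¹ (k+1) m * Ext S m i with hg
  have h0 : (S⁻¹ * S) ⟨k+1, hk⟩ ⟨i, hi⟩ = 0 := by
    rw [hOS hpd, Matrix.one_apply_ne]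
    simp [Fin.ext_iff]; omega
  have h1 : ∑ m : Fin p, S⁻¹ ⟨k+1, hk⟩ m * S m ⟨i, hi⟩ = 0 := by
    rw [← Matrix.mul_apply]; exact h0
  have h2 : ∀ m : Fin p, g m.1 = S⁻¹ ⟨k+1, hk⟩ m * S m ⟨i, hi⟩ := by
    intro m
    show Ext S⁻¹ (k+1) m.1 * Ext S m.1 i = _
    rw [ext_apply S⁻¹ hk m.isLt, ext_apply S m.isLt hi]
  have h3 : ∑ m ∈ Finset.range p, g m = 0 := by
    rw [← Fin.sum_univ_eq_sum_range g]
    rw [← h1]; exact Finset.sum_congr rfl (fun m _ => h2 m)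
  -- extend the range
  have h4 : ∑ m ∈ Finset.range (p + (k + 3)), g m = 0 := by
    rw [← Finset.sum_subset (Finset.range_subset_range.2 (Nat.le_add_right _ _))]
    · exact h3
    · intro x _ hx
      rw [Finset.mem_range, not_lt] at hx
      simp [hg, ext_zero_left S hx]
  have hzero : ∀ m ∈ Finset.range (p + (k + 3)), m ∉ ({k, k+1, k+2} : Finset ℕ) → g m = 0 := by
    intro m _ hm
    simp only [Finset.mem_insert, Finset.mem_singleton] at hm
    push_neg at hm
    by_cases hmp : m < p
    · have : S⁻¹ ⟨k+1, hk⟩ ⟨m, hmp⟩ = 0 := by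
        apply htri
        simp only [Fin.val_mk]
        push_cast
        rw [le_abs]
        omega
      rw [hg]
      simp [ext_apply S⁻¹ hk hmp, this]
    · simp [hg, ext_zero_left S (not_lt.1 hmp)]
  have h5 : ∑ m ∈ ({k, k+1, k+2} : Finset ℕ), g m = 0 := by
    rw [Finset.sum_subset _ hzero]
    · exact h4
    · intro x hx
      simp only [Finset.mem_insert, Finset.mem_singleton] at hx
      rw [Finset.mem_range]
      omega
  have h6 : ∑ m ∈ ({k, k+1, k+2} : Finset ℕ), g m = g k + g (k+1) + g (k+2) := by
    rw [Finset.sum_insert (by simp), Finset.sum_insert (by simp), Finset.sum_singleton, add_assoc]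
  rw [h6] at h5
  exact h5

/-- Wronskian telescoping. -/
lemma wronskian {i j : ℕ} (hij : i ≤ j) (hi : i < p) :
    ∀ d k, j ≤ k → p ≤ k + d →
      Ext S⁻¹ k (k+1) *
        (Ext S (k+1) i * Ext S k j - Ext S k i * Ext S (k+1) j) = 0 := by
  intro d
  induction d with
  | zero =>
    intro k _ hk
    rw [ext_zero_left S⁻¹ (by omega)]
    ring
  | succ d ih =>
    intro k hjk hk
    by_cases hk1 : k + 1 < p
    · have hjp : j < p := by omega
      have e1 := three_term hpd htri hk1 hi (by omega)
      have e2 := three_term hpd htri hk1 hjp (by omega)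
      have hsymO := ext_symm (Osymm hpd) (m := k) (n := k+1)
      have hrec := ih (k+1) (by omega) (by omega)
      -- relation: -c k * W k + c (k+1) * W (k+1) = 0
      have key : Ext S⁻¹ (k+1) k *
          (Ext S (k+1) i * Ext S k j - Ext S k i * Ext S (k+1) j)
          = Ext S⁻¹ (k+1) (k+2) *
          (Ext S (k+2) i * Ext S (k+1) j - Ext S (k+1) i * Ext S (k+2) j) := by
        linear_combination Ext S (k+1) i * e2 - Ext S (k+1) j * e1
      rw [← hsymO, key]
      exact hrec
    · rw [ext_zero_right S⁻¹ k (by omega)]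
      ring

/-- If the off-diagonal inverse entry `Ω_{j,j+1}` vanishes, the matrix decouples:
`S_{m,j+1} = 0` for all `m ≤ j`. -/
lemma block_zero {j : ℕ} (hj1 : j + 1 < p) (hc : Ext S⁻¹ j (j+1) = 0) :
    ∀ m : Fin p, m.1 ≤ j → S m ⟨j+1, hj1⟩ = 0 := by
  set n : Fin p := ⟨j+1, hj1⟩ with hn
  set v : Fin p → ℝ := fun m => if m.1 ≤ j then S m n else 0 with hvdef
  have hO0 : ∀ (a b : Fin p), a.1 ≤ j → j < b.1 → S⁻¹ a b = 0 := by
    intro a b ha hb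
    by_cases hab : b.1 = j + 1 ∧ a.1 = j
    · have ha' : a = ⟨j, Nat.lt_of_succ_lt hj1⟩ := Fin.ext hab.2
      have hb' : b = ⟨j+1, hj1⟩ := Fin.ext hab.1
      rw [ha', hb', ← ext_apply S⁻¹ (Nat.lt_of_succ_lt hj1) hj1, hc]
    · apply htri
      rw [le_abs]
      push_neg at hab
      omega
  have hv : S⁻¹.mulVec v = 0 := by
    funext m
    show ∑ k, S⁻¹ m k * v k = 0
    by_cases hm : m.1 ≤ j
    · have hterm : ∀ k : Fin p, S⁻¹ m k * v k = S⁻¹ m k * S k n := by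
        intro k
        by_cases hk : k.1 ≤ j
        · rw [hvdef]; simp [hk]
        · rw [hO0 m k hm (by omega)]
          ring
      rw [Finset.sum_congr rfl (fun k _ => hterm k), ← Matrix.mul_apply, hOS hpd,
        Matrix.one_apply_ne (by
          intro h
          rw [hn] at h
          have := congrArg Fin.val h
          simp only [Fin.val_mk] at this
          omega)]
    · apply Finset.sum_eq_zero
      intro k _
      by_cases hk : k.1 ≤ j
      · rw [← Osymm hpd m k, hO0 k m hk (by omega)]
        ring
      · rw [hvdef]; simp [hk]
  have hv0 : v = 0 := by
    have h1 : S * S⁻¹ = 1 := Matrix.mul_nonsing_inv S hpd.det_pos.ne'.isUnit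
    calc v = (S * S⁻¹).mulVec v := by rw [h1, Matrix.one_mulVec]
    _ = S.mulVec (S⁻¹.mulVec v) := by rw [← Matrix.mulVec_mulVec]
    _ = 0 := by rw [hv, Matrix.mulVec_zero]
  intro m hm
  have := congrFun hv0 m
  simpa [hvdef, hm] using this

end Main

end TriAux

/-- **Product formula for covariances with tridiagonal inverse.**
If `Σ` is a real symmetric positive definite matrix whose inverse is tridiagonal, then for all
indices `i ≤ j`, `Σ_{i,j} = Σ_{i,i} ∏_{l=i}^{j−1} (Σ_{l,l+1}/Σ_{l,l})`
(with the empty product equal to 1). -/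
theorem tridiagonal_inverse_entry_prod
    (p : ℕ) (hp : 1 ≤ p) (S : Matrix (Fin p) (Fin p) ℝ)
    (hpd : S.PosDef)
    (htri : ∀ j k : Fin p, 2 ≤ |(j : ℤ) - (k : ℤ)| → S⁻¹ j k = 0) :
    ∀ i j : Fin p, i ≤ j →
      S i j = S i i * ∏ l ∈ Finset.Ico (i : ℕ) (j : ℕ), regressionStep S l := by
  intro i j hij
  open TriAux in
  suffices key : ∀ n, ∀ hn : n < p, ∀ i : Fin p, i.1 ≤ n →
      S i ⟨n, hn⟩ = S i i * ∏ l ∈ Finset.Ico (i : ℕ) n, regressionStep S l by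
    have := key j.1 j.isLt i (Fin.le_def.1 hij)
    simpa using this
  intro n
  induction n with
  | zero =>
    intro hn i hi
    have hi0 : i = ⟨0, hn⟩ := Fin.ext (Nat.le_zero.mp hi)
    rw [hi0]
    simp
  | succ n ih =>
    intro hn i hi
    by_cases hin : i.1 = n + 1
    · have hi0 : i = ⟨n + 1, hn⟩ := Fin.ext hin
      rw [hi0]
      simp [hin]
    · have hi' : i.1 ≤ n := by omega
      have hnp : n < p := by omega
      have ihh := ih hnp i hi'
      have hprod : ∏ l ∈ Finset.Ico (i : ℕ) (n+1), regressionStep S l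
          = (∏ l ∈ Finset.Ico (i : ℕ) n, regressionStep S l) * regressionStep S n :=
        Finset.prod_Ico_succ_top hi' _
      have hreg : regressionStep S n
          = S ⟨n, hnp⟩ ⟨n+1, hn⟩ / S ⟨n, hnp⟩ ⟨n, hnp⟩ := dif_pos hn
      by_cases hcz : TriAux.Ext S⁻¹ n (n+1) = 0
      · have h1 : S i ⟨n+1, hn⟩ = 0 := TriAux.block_zero hpd htri hn hcz i hi'
        have h2 : S ⟨n, hnp⟩ ⟨n+1, hn⟩ = 0 :=
          TriAux.block_zero hpd htri hn hcz ⟨n, hnp⟩ (le_refl n)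
        rw [h1, hprod, hreg, h2]
        simp
      · have hw := TriAux.wronskian hpd htri (i := i.1) (j := n) hi' i.isLt p n
          (le_refl n) (by omega)
        have hW : TriAux.Ext S (n+1) i.1 * TriAux.Ext S n n
            - TriAux.Ext S n i.1 * TriAux.Ext S (n+1) n = 0 := by
          rcases mul_eq_zero.1 hw with h | h
          · exact absurd h hcz
          · exact h
        rw [TriAux.ext_apply S hn i.isLt, TriAux.ext_apply S hnp hnp,
          TriAux.ext_apply S hnp i.isLt, TriAux.ext_apply S hn hnp] at hW
        simp only [Fin.eta] at hW
        rw [TriAux.Ssymm hpd i ⟨n+1, hn⟩, TriAux.Ssymm hpd i ⟨n, hnp⟩,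
          TriAux.Ssymm hpd ⟨n, hnp⟩ ⟨n+1, hn⟩] at hW
        have hdiag : S ⟨n, hnp⟩ ⟨n, hnp⟩ ≠ 0 := (TriAux.diag_pos hpd _).ne'
        rw [hprod, hreg, ← mul_assoc, ← ihh]
        field_simp
        linear_combination hW
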